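/- arXiv:1708.00642 — 2 statements merged into one kernel-verified Lean document; each statement's English description precedes it below -/
import Mathlib

section
/- Let η be a countable ordinal, (R^ρ)_{ρ≤η} be a resolution family (each R^{ρ+1} distinguished in R^ρ, and R^λ = ⋂_{ρ<λ} R^ρ at limits), and ρ < η. If s, t, u ∈ 2^{<ω} satisfy s R^0 t, t R^ρ u, and s R^{ρ+1} u, then s R^{ρ+1} t. -/
/-- A tree relation on `2^{<ω}` (finite binary sequences, encoded as `List Bool`):
a partial order `R` such that the empty sequence is `R`-below every sequence, and for
every `s` the set of `R`-predecessors of `s` is finite and linearly ordered by `R`. -/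
structure TreeRel where
  R : List Bool → List Bool → Prop
  refl : ∀ s, R s s
  trans : ∀ s t u, R s t → R t u → R s u
  antisymm : ∀ s t, R s t → R t s → s = t
  nil_rel : ∀ s, R [] s
  pred_finite : ∀ s, {t | R t s}.Finite
  pred_chain : ∀ s t u, R t s → R u s → R t u ∨ R u t

/-- `γ : ℕ → List Bool` is the strictly `R`-increasing enumeration of an infinite
`R`-branch (a ⊆-maximal subset of `2^{<ω}` linearly ordered by `R`): it is strictly
`R`-increasing and its range is downward closed under `R` (which characterizes maximal
infinite chains of a tree relation). -/
def IsBranch (R : List Bool → List Bool → Prop) (γ : ℕ → List Bool) : Prop :=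
  (∀ k, R (γ k) (γ (k+1)) ∧ γ k ≠ γ (k+1)) ∧
  (∀ t k, R t (γ k) → ∃ j ≤ k, γ j = t)

/-- `R` is distinguished in `S` (`R ⊆ S`): whenever `s S t S u` and `s R u`, then `s R t`. -/
def Distinguished (R S : List Bool → List Bool → Prop) : Prop :=
  ∀ s t u, S s t → S t u → R s u → R s t

/-- A resolution family `(R^ρ)_{ρ≤η}`: a family of tree relations such that `R^{ρ+1}`
is a distinguished subtree of `R^ρ` for `ρ < η`, and `R^λ = ⋂_{ρ<λ} R^ρ` at limits. -/
def IsResolutionFamily (η : Ordinal.{0}) (R : Ordinal.{0} → List Bool → List Bool → Prop) : Prop :=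
  (∀ ρ ≤ η, ∃ T : TreeRel, T.R = R ρ) ∧
  (∀ ρ : Ordinal, ρ + 1 ≤ η → (∀ s t, R (ρ+1) s t → R ρ s t) ∧ Distinguished (R (ρ+1)) (R ρ)) ∧
  (∀ l ≤ η, Order.IsSuccLimit l → ∀ s t, (R l s t ↔ ∀ ρ < l, R ρ s t))

lemma resFam_mono (η : Ordinal.{0}) (R : Ordinal.{0} → List Bool → List Bool → Prop)
    (hR : IsResolutionFamily η R) :
    ∀ τ, τ ≤ η → ∀ σ, σ ≤ τ → ∀ s t, R τ s t → R σ s t := by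
  intro τ
  induction τ using Ordinal.limitRecOn with
  | zero =>
    intro _ σ hσ s t h
    simpa [nonpos_iff_eq_zero.mp hσ] using h
  | add_one τ ih =>
    intro hτη σ hσ s t h
    rcases eq_or_lt_of_le hσ with rfl | hlt
    · exact h
    · have hστ : σ ≤ τ := Order.lt_succ_iff.mp hlt
      have hsub := (hR.2.1 τ hτη).1 s t h
      exact ih (le_trans (Order.le_succ τ) hτη) σ hστ s t hsub
  | limit l hl ih =>
    intro hlη σ hσ s t h
    rcases eq_or_lt_of_le hσ with rfl | hlt
    · exact h
    · exact ((hR.2.2 l hlη hl s t).mp h) σ hlt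

/-- Lemma 2.3.2 of [L3]: for a resolution family `(R^ρ)_{ρ≤η}` with `η`
a countable ordinal and `ρ < η`, if `s R^0 t`, `t R^ρ u` and `s R^{ρ+1} u`,
then `s R^{ρ+1} t`. -/
theorem stmt_7 (η : Ordinal.{0}) (hη : η.card ≤ Cardinal.aleph0)
    (R : Ordinal.{0} → List Bool → List Bool → Prop) (hR : IsResolutionFamily η R)
    (ρ : Ordinal.{0}) (hρ : ρ < η) (s t u : List Bool)
    (h1 : R 0 s t) (h2 : R ρ t u) (h3 : R (ρ+1) s u) : R (ρ+1) s t := by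
  obtain ⟨_, hsucc, hlim⟩ := hR
  -- First: s R^σ t for all σ ≤ ρ
  have key : ∀ σ, σ ≤ ρ → R σ s t := by
    intro σ
    induction σ using Ordinal.limitRecOn with
    | zero => intro _; exact h1
    | add_one σ ih =>
      intro hσρ
      have hσ : σ ≤ ρ := le_trans (Order.le_succ σ) hσρ
      have hση : σ + 1 ≤ η := le_trans hσρ hρ.le
      have hst : R σ s t := ih hσ
      have htu : R σ t u := resFam_mono η R ⟨‹_›, hsucc, hlim⟩ ρ hρ.le σ hσ t u h2
      have hρ1 : ρ + 1 ≤ η := by rwa [Ordinal.add_one_eq_succ, Order.succ_le_iff]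
      have hsu : R (σ+1) s u :=
        resFam_mono η R ⟨‹_›, hsucc, hlim⟩ (ρ+1) hρ1 (σ+1)
          (by rw [Ordinal.add_one_eq_succ]; exact hσρ.trans (Order.le_succ ρ)) s u h3
      exact (hsucc σ hση).2 s t u hst htu hsu
    | limit l hl ih =>
      intro hlρ
      have hlη : l ≤ η := le_trans hlρ hρ.le
      exact (hlim l hlη hl s t).mpr (fun σ hσ => ih σ hσ (le_trans hσ.le hlρ))
  have hst : R ρ s t := key ρ le_rfl
  exact (hsucc ρ (by rwa [Ordinal.add_one_eq_succ, Order.succ_le_iff])).2 s t u hst h2 h3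
end

section
/- Let ξ ≥ 1 be a countable ordinal, Q ⊆ 2^ω be a Π⁰_ξ set which is not Σ⁰_ξ, and P := h[Q] ⊆ [⊆] its image under the canonical homeomorphism h : 2^ω → [⊆]. Let (R^ρ)_{ρ≤η} be a resolution family with R^0 = ⊆ such that the canonical map Π : [R^η] → [⊆] is a continuous bijection with Σ⁰_ξ-measurable inverse (ξ = η+1). Set A := {(β,α) ∈ [R^η] × [⊆] : Π(β) = α ∈ P} and B := {(β,α) : Π(β) = α ∉ P}. Then A cannot be separated from B by a countable union of rectangles of the form O × S with O open in [R^η] and S ∈ Σ⁰_ξ([⊆]). -/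
/-- The boldface class `Σ⁰_ξ` of the Borel hierarchy on a topological space:
`Σ⁰_ξ` contains the open sets, and for `ξ > 1` the countable unions
`⋃ₙ Cₙ` where each `Cₙ` is the complement of a `Σ⁰_{ρₙ}` set with `1 ≤ ρₙ < ξ`. -/
inductive Sig0 (X : Type*) [TopologicalSpace X] : Ordinal.{0} → Set X → Prop
  | of_open (ξ : Ordinal) (A : Set X) : IsOpen A → Sig0 X ξ A
  | union (ξ : Ordinal) (g : ℕ → Ordinal) (f : ℕ → Set X) :
      (∀ n, 1 ≤ g n) → (∀ n, g n < ξ) → (∀ n, Sig0 X (g n) (f n)) → Sig0 X ξ (⋃ n, (f n)ᶜ)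

/-- The boldface class `Π⁰_ξ`: complements of `Σ⁰_ξ` sets. -/
def Pi0 (X : Type*) [TopologicalSpace X] (ξ : Ordinal.{0}) (A : Set X) : Prop := Sig0 X ξ Aᶜ

/-- `2^{<ω}` carries the discrete topology. -/
instance : TopologicalSpace (List Bool) := ⊥

/-- The initial segment (prefix) relation `⊆` on `2^{<ω}`. -/
def prefixRel : List Bool → List Bool → Prop := fun s t => s <+: t

/-- The space of infinite `R`-branches (identified with their increasing
enumerations), with the topology induced by the product of discrete topologies. -/
abbrev Branches (R : List Bool → List Bool → Prop) := {γ : ℕ → List Bool // IsBranch R γ}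

/-- The image `h[Q] ⊆ [⊆]` of `Q ⊆ 2^ω` under the canonical homeomorphism `h` sending
`α` to the sequence of its initial segments. -/
def cantorImage (Q : Set (ℕ → Bool)) : Set (Branches prefixRel) :=
  {γ | ∃ α ∈ Q, ∀ n, γ.1 n = List.ofFn (fun i : Fin n => α i)}


instance : DiscreteTopology (List Bool) := ⟨rfl⟩

instance (R : List Bool → List Bool → Prop) :
    TopologicalSpace.MetrizableSpace (Branches R) :=
  Topology.IsEmbedding.subtypeVal.metrizableSpace

section Sig0Lemmas

variable {X Y : Type*} [TopologicalSpace X] [TopologicalSpace Y]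

lemma sig0_mono {ρ ξ : Ordinal} {A : Set X} (h : Sig0 X ρ A) (hle : ρ ≤ ξ) : Sig0 X ξ A := by
  induction h with
  | of_open _ A hA => exact .of_open _ _ hA
  | union _ g f hg1 hg2 hf ih => exact .union _ g f hg1 (fun n => lt_of_lt_of_le (hg2 n) hle) hf

lemma sig0_open_of_le_one {ξ : Ordinal} {A : Set X} (hξ : ξ ≤ 1) (h : Sig0 X ξ A) : IsOpen A := by
  cases h with
  | of_open _ _ hA => exact hA
  | union _ g f hg1 hg2 hf =>
      exact absurd (lt_of_lt_of_le (hg2 0) hξ) (not_lt.2 (hg1 0))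

lemma sig0_preimage {ξ : Ordinal} {A : Set Y} (f : X → Y) (hf : Continuous f)
    (h : Sig0 Y ξ A) : Sig0 X ξ (f ⁻¹' A) := by
  induction h with
  | of_open _ A hA => exact .of_open _ _ (hA.preimage hf)
  | union ξ' g F hg1 hg2 hF ih =>
      have : f ⁻¹' (⋃ n, (F n)ᶜ) = ⋃ n, (f ⁻¹' F n)ᶜ := by
        simp [Set.preimage_iUnion]
      rw [this]
      exact .union _ g _ hg1 hg2 ih

open TopologicalSpace in
lemma sig0_normal [MetrizableSpace X] {ξ : Ordinal} {A : Set X} (hξ : 1 < ξ)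
    (h : Sig0 X ξ A) :
    ∃ (g : ℕ → Ordinal) (f : ℕ → Set X),
      (∀ n, 1 ≤ g n) ∧ (∀ n, g n < ξ) ∧ (∀ n, Sig0 X (g n) (f n)) ∧ A = ⋃ n, (f n)ᶜ := by
  cases h with
  | of_open _ _ hA =>
      letI := metrizableSpaceMetric X
      have hGδ : IsGδ Aᶜ := (hA.isClosed_compl).isGδ
      obtain ⟨f, hf, hfe⟩ := isGδ_iff_eq_iInter_nat.1 hGδ
      refine ⟨fun _ => 1, f, fun _ => le_refl _, fun _ => hξ,
        fun n => .of_open _ _ (hf n), ?_⟩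
      rw [← compl_compl A, hfe, Set.compl_iInter]
  | union _ g f hg1 hg2 hf => exact ⟨g, f, hg1, hg2, hf, rfl⟩

open TopologicalSpace in
lemma sig0_iUnion [MetrizableSpace X] {ξ : Ordinal} {A : ℕ → Set X}
    (h : ∀ n, Sig0 X ξ (A n)) : Sig0 X ξ (⋃ n, A n) := by
  rcases le_or_gt ξ 1 with hξ | hξ
  · exact .of_open _ _ (isOpen_iUnion fun n => sig0_open_of_le_one hξ (h n))
  · choose g f hg1 hg2 hf hfe using fun n => sig0_normal hξ (h n)
    let e : ℕ ≃ ℕ × ℕ := (Denumerable.eqv (ℕ × ℕ)).symm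
    have key : (⋃ n, A n) = ⋃ k, (f (e k).1 (e k).2)ᶜ := by
      ext x
      simp only [Set.mem_iUnion, Set.mem_compl_iff]
      constructor
      · rintro ⟨n, hx⟩
        rw [hfe n] at hx
        simp only [Set.mem_iUnion, Set.mem_compl_iff] at hx
        obtain ⟨m, hm⟩ := hx
        exact ⟨e.symm (n, m), by simp [e]; exact hm⟩
      · rintro ⟨k, hk⟩
        refine ⟨(e k).1, ?_⟩
        rw [hfe (e k).1]
        exact Set.mem_iUnion.2 ⟨(e k).2, hk⟩
    rw [key]
    exact .union _ _ _ (fun k => hg1 _ _) (fun k => hg2 _ _) (fun k => hf _ _)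

open TopologicalSpace in
lemma sig0_union2 [MetrizableSpace X] {ξ : Ordinal} {A B : Set X}
    (hA : Sig0 X ξ A) (hB : Sig0 X ξ B) : Sig0 X ξ (A ∪ B) := by
  have : A ∪ B = ⋃ n, (if n = 0 then A else B) := by
    ext x; simp only [Set.mem_union, Set.mem_iUnion]
    constructor
    · rintro (h | h); exacts [⟨0, by simp [h]⟩, ⟨1, by simp [h]⟩]
    · rintro ⟨n, h⟩; by_cases hn : n = 0 <;> simp [hn] at h <;> [left; right] <;> exact h
  rw [this]
  exact sig0_iUnion fun n => by by_cases hn : n = 0 <;> simp [hn] <;> assumption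

open TopologicalSpace in
lemma sig0_inter [MetrizableSpace X] {ξ : Ordinal} {A B : Set X}
    (hA : Sig0 X ξ A) (hB : Sig0 X ξ B) : Sig0 X ξ (A ∩ B) := by
  rcases le_or_gt ξ 1 with hξ | hξ
  · exact .of_open _ _ ((sig0_open_of_le_one hξ hA).inter (sig0_open_of_le_one hξ hB))
  · obtain ⟨g, f, hg1, hg2, hf, hfe⟩ := sig0_normal hξ hA
    obtain ⟨g', f', hg1', hg2', hf', hfe'⟩ := sig0_normal hξ hB
    let e : ℕ ≃ ℕ × ℕ := (Denumerable.eqv (ℕ × ℕ)).symm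
    have key : A ∩ B = ⋃ k, (f (e k).1 ∪ f' (e k).2)ᶜ := by
      rw [hfe, hfe']
      ext x
      simp only [Set.mem_inter_iff, Set.mem_iUnion, Set.mem_compl_iff, Set.mem_union, not_or]
      constructor
      · rintro ⟨⟨n, hn⟩, ⟨m, hm⟩⟩
        exact ⟨e.symm (n, m), by simp [e]; exact ⟨hn, hm⟩⟩
      · rintro ⟨k, hk1, hk2⟩
        exact ⟨⟨(e k).1, hk1⟩, ⟨(e k).2, hk2⟩⟩
    rw [key]
    refine .union _ (fun k => max (g (e k).1) (g' (e k).2)) _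
      (fun k => le_trans (hg1 _) (le_max_left _ _))
      (fun k => max_lt (hg2 _) (hg2' _))
      (fun k => sig0_union2 (sig0_mono (hf _) (le_max_left _ _))
        (sig0_mono (hf' _) (le_max_right _ _)))

end Sig0Lemmas

lemma branch_ofFn (α : ℕ → Bool) :
    IsBranch prefixRel (fun n => List.ofFn fun i : Fin n => α i) := by
  constructor
  · intro k
    constructor
    · show List.ofFn _ <+: List.ofFn _
      rw [List.ofFn_succ']
      refine ⟨[α k], ?_⟩
      simp [List.concat_eq_append]
    · intro h
      have := congrArg List.length h
      simp at this
  · intro t k (h : t <+: _)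
    have hlen : t.length ≤ k := by simpa using h.length_le
    refine ⟨t.length, hlen, ?_⟩
    apply List.ext_get (by simp)
    intro n h1 h2
    simp only [List.get_eq_getElem, List.getElem_ofFn]
    have h3 : n < t.length := by simpa using h1
    rw [h.getElem h3]
    simp

lemma ofFn_inj' {α β : ℕ → Bool}
    (h : ∀ n, (List.ofFn fun i : Fin n => α i) = (List.ofFn fun i : Fin n => β i)) : α = β := by
  funext i
  have := h (i+1)
  have h2 := congrArg (fun l : List Bool => l[i]?) this
  simp only [List.getElem?_ofFn, List.ofFnNthVal, dif_pos (Nat.lt_succ_self i)] at h2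
  exact Option.some.inj h2

/-- The canonical homeomorphism `h : 2^ω → [⊆]`. -/
def hmap (α : ℕ → Bool) : Branches prefixRel :=
  ⟨fun n => List.ofFn fun i : Fin n => α i, branch_ofFn α⟩

lemma hmap_continuous : Continuous hmap := by
  apply Continuous.subtype_mk
  apply continuous_pi
  intro n
  have h1 : Continuous fun (α : ℕ → Bool) => (fun i : Fin n => α i) :=
    continuous_pi fun i => continuous_apply (i : ℕ)
  exact (continuous_of_discreteTopology (f := fun v : Fin n → Bool => List.ofFn v)).comp h1

lemma hmap_preimage (Q : Set (ℕ → Bool)) : hmap ⁻¹' (cantorImage Q) = Q := by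
  ext α
  constructor
  · rintro ⟨β, hβ, hn⟩
    have : α = β := ofFn_inj' hn
    rwa [this]
  · intro hα
    exact ⟨α, hα, fun n => rfl⟩

/-- Lemma `nonsep1x`: let `ξ = η + 1 ≥ 1` be a countable ordinal,
`Q ⊆ 2^ω` be `Π⁰_ξ` but not `Σ⁰_ξ`, `P := h[Q] ⊆ [⊆]`, `(R^ρ)_{ρ≤η}` a resolution
family with `R^0 = ⊆` whose canonical map `Π : [R^η] → [⊆]` is a continuous bijection
with `Σ⁰_ξ`-measurable inverse. Set `𝔸 := {(β,α) : Π(β) = α ∈ P}` and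
`𝔹 := {(β,α) : Π(β) = α ∉ P}`. Then `𝔸` is not separable from `𝔹` by a countable
union of rectangles `O × S` with `O` open in `[R^η]` and `S ∈ Σ⁰_ξ([⊆])`. -/
theorem stmt_12 (ξ η : Ordinal.{0}) (hξc : ξ.card ≤ Cardinal.aleph0) (hξ1 : 1 ≤ ξ)
    (hξη : ξ = η + 1)
    (R : Ordinal.{0} → List Bool → List Bool → Prop) (hR : IsResolutionFamily η R)
    (hR0 : R 0 = prefixRel)
    (Q : Set (ℕ → Bool)) (hQ1 : Pi0 (ℕ → Bool) ξ Q) (hQ2 : ¬ Sig0 (ℕ → Bool) ξ Q)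
    (Pi : Branches (R η) → Branches prefixRel)
    (hPican : ∀ γ, Set.range γ.1 ⊆ Set.range (Pi γ).1)
    (hPicont : Continuous Pi) (hPibij : Function.Bijective Pi)
    (g : Branches prefixRel → Branches (R η))
    (hg1 : Function.LeftInverse g Pi) (hg2 : Function.RightInverse g Pi)
    (hgmeas : ∀ U : Set (Branches (R η)), IsOpen U → Sig0 (Branches prefixRel) ξ (g ⁻¹' U)) :
    ¬ ∃ (O : ℕ → Set (Branches (R η))) (S : ℕ → Set (Branches prefixRel)),
        (∀ n, IsOpen (O n) ∧ Sig0 (Branches prefixRel) ξ (S n)) ∧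
        {p : Branches (R η) × Branches prefixRel | Pi p.1 = p.2 ∧ p.2 ∈ cantorImage Q}
          ⊆ (⋃ n, O n ×ˢ S n) ∧
        (⋃ n, O n ×ˢ S n) ∩
          {p : Branches (R η) × Branches prefixRel | Pi p.1 = p.2 ∧ p.2 ∉ cantorImage Q}
          = ∅ := by
  rintro ⟨O, S, hOS, hA, hB⟩
  set P := cantorImage Q with hP
  have hPsig : Sig0 (Branches prefixRel) ξ P := by
    have key : P = ⋃ n, (g ⁻¹' O n ∩ S n) := by
      ext α
      constructor
      · intro hα
        have hmem : (g α, α) ∈ ⋃ n, O n ×ˢ S n := hA ⟨hg2 α, hα⟩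
        simp only [Set.mem_iUnion, Set.mem_prod] at hmem ⊢
        obtain ⟨n, h1, h2⟩ := hmem
        exact ⟨n, h1, h2⟩
      · intro hα
        simp only [Set.mem_iUnion] at hα
        obtain ⟨n, h1, h2⟩ := hα
        by_contra hn
        have hmem : (g α, α) ∈ (⋃ n, O n ×ˢ S n) ∩
            {p : Branches (R η) × Branches prefixRel | Pi p.1 = p.2 ∧ p.2 ∉ P} :=
          ⟨Set.mem_iUnion.2 ⟨n, h1, h2⟩, hg2 α, hn⟩
        rw [hB] at hmem
        exact hmem
    rw [key]
    exact sig0_iUnion fun n => sig0_inter (hgmeas _ (hOS n).1) (hOS n).2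
  apply hQ2
  have : Q = hmap ⁻¹' P := (hmap_preimage Q).symm
  rw [this]
  exact sig0_preimage hmap hmap_continuous hPsig
end
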